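/- Let V₁, V₂ and W be finite-dimensional real vector spaces, let φ: V₁ × V₂ → W be a bilinear map, and let W be endowed with a nondegenerate symmetric bilinear form ⟨,⟩. For X ∈ RE(φ) set τ_φ(X) = dim(φ_X(V₂) ∩ φ_X(V₂)^⊥) and τ(φ) = min_{X ∈ RE(φ)} τ_φ(X). Then RE^#(φ) = {X ∈ RE(φ) : τ_φ(X) = τ(φ)} is an open and dense subset of V₁. -/

import Mathlib

open Module LinearMap

section Aux

variable {V W : Type*} [AddCommGroup V] [Module ℝ V] [FiniteDimensional ℝ V]
  [AddCommGroup W] [Module ℝ W] [FiniteDimensional ℝ W]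

omit [FiniteDimensional ℝ W] in
private lemma aux_rank_ge (L : V →ₗ[ℝ] W) {k : ℕ} (v : Fin k → V)
    (f : W →ₗ[ℝ] (Fin k → ℝ))
    (h : (Matrix.of fun i j => f (L (v j)) i).det ≠ 0) :
    k ≤ finrank ℝ (LinearMap.range L) := by
  set P : (Fin k → ℝ) →ₗ[ℝ] V := (Pi.basisFun ℝ (Fin k)).constr ℝ v with hP
  set c : (Fin k → ℝ) →ₗ[ℝ] (Fin k → ℝ) := f ∘ₗ (L ∘ₗ P) with hc
  have hM : LinearMap.toMatrix' c = Matrix.of fun i j => f (L (v j)) i := by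
    ext i j
    simp only [LinearMap.toMatrix'_apply, hc, LinearMap.comp_apply, Matrix.of_apply]
    congr 2
    rw [hP]
    simpa using (Pi.basisFun ℝ (Fin k)).constr_basis ℝ v j
  have hdet : LinearMap.det c ≠ 0 := by
    rw [← LinearMap.det_toMatrix' c, hM]; exact h
  have hsurj : LinearMap.range c = ⊤ :=
    LinearMap.range_eq_top.mpr (LinearMap.equivOfDetNeZero c hdet).surjective
  have h1 : LinearMap.range c ≤ Submodule.map f (LinearMap.range L) := by
    rw [hc, LinearMap.range_comp]
    exact Submodule.map_mono (LinearMap.range_comp_le_range P L)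
  have h2 : (k : ℕ) = finrank ℝ (LinearMap.range c) := by
    rw [hsurj]
    simp [finrank_top]
  rw [h2]
  calc finrank ℝ (LinearMap.range c) ≤ finrank ℝ (Submodule.map f (LinearMap.range L)) :=
        Submodule.finrank_mono h1
    _ ≤ finrank ℝ (LinearMap.range L) := Submodule.finrank_map_le f _

omit [FiniteDimensional ℝ V] in
private lemma aux_exists_det (L : V →ₗ[ℝ] W) {k : ℕ} (hk : k ≤ finrank ℝ (LinearMap.range L)) :
    ∃ (v : Fin k → V) (f : W →ₗ[ℝ] (Fin k → ℝ)),
      (Matrix.of fun i j => f (L (v j)) i).det ≠ 0 := by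
  classical
  set r := finrank ℝ (LinearMap.range L) with hr
  let b : Basis (Fin r) ℝ (LinearMap.range L) := finBasis ℝ (LinearMap.range L)
  let w : Fin k → W := fun j => (b (Fin.castLE hk j) : W)
  have hw : LinearIndependent ℝ w := by
    have h1 : LinearIndependent ℝ (fun j : Fin k => b (Fin.castLE hk j)) :=
      b.linearIndependent.comp _ (Fin.castLE_injective hk)
    exact h1.map' (LinearMap.range L).subtype (Submodule.ker_subtype _)
  let m : (Fin k → ℝ) →ₗ[ℝ] W := (Pi.basisFun ℝ (Fin k)).constr ℝ w
  have hm : LinearMap.ker m = ⊥ := by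
    rw [LinearMap.ker_eq_bot']
    intro c hc
    have hmc : ∑ j, c j • w j = 0 := by
      rw [← hc]
      rw [Basis.constr_apply_fintype]
      simp
    exact funext (Fintype.linearIndependent_iff.mp hw c hmc)
  obtain ⟨g, hg⟩ := m.exists_leftInverse_of_injective hm
  choose v hv using fun j => (b (Fin.castLE hk j)).2
  refine ⟨v, g, ?_⟩
  have hId : (Matrix.of fun i j => g (L (v j)) i) = 1 := by
    ext i j
    have h1 : L (v j) = w j := hv j
    have h2 : m (Pi.single j 1) = w j := by
      have := (Pi.basisFun ℝ (Fin k)).constr_basis ℝ w j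
      simpa [m] using this
    have h3 : g (w j) = Pi.single j 1 := by
      rw [← h2]
      have := congrArg (fun t => t (Pi.single j (1 : ℝ))) hg
      simpa using this
    rw [Matrix.of_apply, h1, h3]
    by_cases hij : i = j <;> simp [hij, Matrix.one_apply, Pi.single_apply]
  rw [hId]
  simp

omit [FiniteDimensional ℝ W] in
private lemma aux_rank_psi (B : LinearMap.BilinForm ℝ W) (hBsymm : ∀ x y, B x y = B y x)
    (L : V →ₗ[ℝ] W) :
    finrank ℝ (LinearMap.range (L.dualMap ∘ₗ (B ∘ₗ L)))
      + finrank ℝ ↥(LinearMap.range L ⊓ B.orthogonal (LinearMap.range L))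
      = finrank ℝ (LinearMap.range L) := by
  classical
  set R : Submodule ℝ W := LinearMap.range L ⊓ B.orthogonal (LinearMap.range L) with hR
  set Ψ : V →ₗ[ℝ] Module.Dual ℝ V := L.dualMap ∘ₗ (B ∘ₗ L) with hΨ
  have hker : LinearMap.ker Ψ = Submodule.comap L R := by
    ext y
    simp only [LinearMap.mem_ker, Submodule.mem_comap, hR, Submodule.mem_inf,
      LinearMap.mem_range, LinearMap.BilinForm.mem_orthogonal_iff]
    constructor
    · intro hy
      refine ⟨⟨y, rfl⟩, ?_⟩
      rintro n ⟨z, rfl⟩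
      have := congrArg (fun t => t z) hy
      simp only [hΨ, LinearMap.comp_apply, LinearMap.dualMap_apply] at this
      rw [hBsymm]
      exact this
    · rintro ⟨-, hy⟩
      ext z
      simp only [hΨ, LinearMap.comp_apply, LinearMap.dualMap_apply, LinearMap.zero_apply]
      have := hy (L z) ⟨z, rfl⟩
      rw [hBsymm]
      exact this
  have hRle : R ≤ LinearMap.range L := inf_le_left
  have hcomap : finrank ℝ (Submodule.comap L R) = finrank ℝ R + finrank ℝ (LinearMap.ker L) := by
    set q := Submodule.comap L R with hq
    have hmaps : ∀ x ∈ q, L x ∈ R := fun x hx => Submodule.mem_comap.mp hx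
    set L' : q →ₗ[ℝ] R := L.restrict hmaps with hL'
    have hrange : LinearMap.range L' = ⊤ := by
      rw [LinearMap.range_eq_top]
      rintro ⟨r, hrR⟩
      obtain ⟨y, hy⟩ := hRle hrR
      refine ⟨⟨y, ?_⟩, ?_⟩
      · simp [hq, Submodule.mem_comap, hy, hrR]
      · apply Subtype.ext
        simpa [hL', LinearMap.restrict_apply] using hy
    have hkerL' : finrank ℝ (LinearMap.ker L') = finrank ℝ (LinearMap.ker L) := by
      have hfwd : ∀ x : LinearMap.ker L', L ((x.1 : q) : V) = 0 := by
        rintro ⟨x, hx⟩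
        have h1 : (L' x : R) = 0 := hx
        have h2 := congrArg Subtype.val h1
        simpa [hL', LinearMap.restrict_apply] using h2
      have hbwd : ∀ y : LinearMap.ker L, (y : V) ∈ q := by
        rintro ⟨y, hy⟩
        rw [LinearMap.mem_ker] at hy
        simp [hq, Submodule.mem_comap, hy]
      have hbwd2 : ∀ y : LinearMap.ker L, (⟨(y : V), hbwd y⟩ : q) ∈ LinearMap.ker L' := by
        rintro ⟨y, hy⟩
        rw [LinearMap.mem_ker]
        apply Subtype.ext
        rw [LinearMap.mem_ker] at hy
        simpa [hL', LinearMap.restrict_apply] using hy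
      have e : ↥(LinearMap.ker L') ≃ₗ[ℝ] ↥(LinearMap.ker L) :=
        { toFun := fun x => ⟨((x.1 : q) : V), by rw [LinearMap.mem_ker]; exact hfwd x⟩
          map_add' := fun x y => rfl
          map_smul' := fun c x => rfl
          invFun := fun y => ⟨⟨(y : V), hbwd y⟩, hbwd2 y⟩
          left_inv := fun x => Subtype.ext (Subtype.ext rfl)
          right_inv := fun y => Subtype.ext rfl }
      exact e.finrank_eq
    have := LinearMap.finrank_range_add_finrank_ker L'
    rw [hrange, hkerL', finrank_top] at this
    have hq2 : finrank ℝ q = finrank ℝ (Submodule.comap L R) := rfl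
    omega
  have h1 := LinearMap.finrank_range_add_finrank_ker Ψ
  have h2 := LinearMap.finrank_range_add_finrank_ker L
  rw [hker, hcomap] at h1
  omega

variable {E : Type*} [NormedAddCommGroup E] [NormedSpace ℝ E] [FiniteDimensional ℝ E]

private lemma aux_analytic_linear (ℓ : E →ₗ[ℝ] ℝ) :
    AnalyticOnNhd ℝ (fun x => ℓ x) Set.univ := by
  have := (LinearMap.toContinuousLinearMap ℓ).analyticOnNhd (Set.univ : Set E)
  simpa using this

omit [FiniteDimensional ℝ E] in
private lemma aux_analytic_det {k : ℕ} (M : E → Matrix (Fin k) (Fin k) ℝ)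
    (h : ∀ i j, AnalyticOnNhd ℝ (fun x => M x i j) Set.univ) :
    AnalyticOnNhd ℝ (fun x => (M x).det) Set.univ := by
  have hdet : (fun x => (M x).det) =
      fun x => ∑ σ : Equiv.Perm (Fin k),
        ((Equiv.Perm.sign σ : ℤ) : ℝ) * ∏ i, M x (σ i) i := by
    ext x
    rw [Matrix.det_apply]
    congr 1
    ext σ
    rw [Units.smul_def, zsmul_eq_mul]
  rw [hdet]
  apply Finset.analyticOnNhd_fun_sum
  intro σ _
  exact (analyticOnNhd_const.mul (Finset.analyticOnNhd_fun_prod _ (fun i _ => h (σ i) i)))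

omit [FiniteDimensional ℝ E] in
private lemma aux_dense {g : E → ℝ} (hg : AnalyticOnNhd ℝ g Set.univ) {x₀ : E}
    (h0 : g x₀ ≠ 0) : Dense {x | g x ≠ 0} := by
  intro x
  by_contra hx
  rw [mem_closure_iff_nhds] at hx
  push_neg at hx
  obtain ⟨U, hU, hdisj⟩ := hx
  have hev : g =ᶠ[nhds x] 0 := by
    filter_upwards [hU] with y hy
    by_contra hgy
    rw [Set.eq_empty_iff_forall_notMem] at hdisj
    exact hdisj y ⟨hy, hgy⟩
  have := hg.eqOn_zero_of_preconnected_of_eventuallyEq_zero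
    (convex_univ).isPreconnected (Set.mem_univ x) hev
  exact h0 (this (Set.mem_univ x₀))

omit [FiniteDimensional ℝ E] in
private lemma aux_basis_expand {d : ℕ} (e : Basis (Fin d) ℝ E) (F : E →ₗ[ℝ] ℝ) (x : E) :
    F x = ∑ l, e.repr x l * F (e l) := by
  conv_lhs => rw [← e.sum_repr x]
  rw [map_sum]
  simp [mul_comm]

end Aux

/-- Proposition (facts), part (ii): with `W` endowed with a nondegenerate symmetric bilinear
form, the set `RE^#(φ)` of regular elements `X` for which
`τ_φ(X) = dim (φ_X(V₂) ∩ φ_X(V₂)^⊥)` is minimal is open and dense in `V₁`. -/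
theorem stmt_1
    {V₁ V₂ W : Type*}
    [NormedAddCommGroup V₁] [NormedSpace ℝ V₁] [FiniteDimensional ℝ V₁]
    [AddCommGroup V₂] [Module ℝ V₂] [FiniteDimensional ℝ V₂]
    [AddCommGroup W] [Module ℝ W] [FiniteDimensional ℝ W]
    (B : LinearMap.BilinForm ℝ W)
    (hBsymm : ∀ x y, B x y = B y x)
    (hBnondeg : B.Nondegenerate)
    (φ : V₁ →ₗ[ℝ] V₂ →ₗ[ℝ] W)
    (κ : ℕ) (hκ : κ = ⨆ X : V₁, finrank ℝ (LinearMap.range (φ X)))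
    (RE : Set V₁) (hRE : RE = {X : V₁ | finrank ℝ (LinearMap.range (φ X)) = κ})
    (τ : V₁ → ℕ)
    (hτ : ∀ X, τ X =
      finrank ℝ ↥(LinearMap.range (φ X) ⊓ B.orthogonal (LinearMap.range (φ X))))
    (τ₀ : ℕ) (hτ₀ : τ₀ = sInf (τ '' RE))
    (REsharp : Set V₁) (hREsharp : REsharp = {X ∈ RE | τ X = τ₀}) :
    IsOpen REsharp ∧ Dense REsharp := by
  classical
  set Ψ : V₁ → (V₂ →ₗ[ℝ] Module.Dual ℝ V₂) :=
    fun X => (φ X).dualMap ∘ₗ (B ∘ₗ φ X) with hΨ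
  have key : ∀ X, finrank ℝ (LinearMap.range (Ψ X)) + τ X
      = finrank ℝ (LinearMap.range (φ X)) := fun X => by
    rw [hτ X]; exact aux_rank_psi B hBsymm (φ X)
  have hbdd : BddAbove (Set.range fun X : V₁ => finrank ℝ (LinearMap.range (φ X))) := by
    refine ⟨finrank ℝ W, ?_⟩
    rintro n ⟨X, rfl⟩
    exact Submodule.finrank_le _
  have hle : ∀ X, finrank ℝ (LinearMap.range (φ X)) ≤ κ := fun X => by
    rw [hκ]; exact le_ciSup hbdd X
  have hκmem : ∃ X₀, finrank ℝ (LinearMap.range (φ X₀)) = κ := by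
    have hne : (Set.range fun X : V₁ => finrank ℝ (LinearMap.range (φ X))).Nonempty :=
      ⟨_, ⟨0, rfl⟩⟩
    have hmem := Nat.sSup_mem hne hbdd
    have : κ ∈ Set.range fun X : V₁ => finrank ℝ (LinearMap.range (φ X)) := by
      rw [hκ, iSup]; exact hmem
    exact this
  have hREne : RE.Nonempty := by
    obtain ⟨X₀, h⟩ := hκmem
    exact ⟨X₀, by rw [hRE]; exact h⟩
  have hτmem : τ₀ ∈ τ '' RE := by
    rw [hτ₀]; exact Nat.sInf_mem (hREne.image τ)
  obtain ⟨X₁, hX₁RE, hX₁τ⟩ := hτmem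
  have hX₁κ : finrank ℝ (LinearMap.range (φ X₁)) = κ := by rw [hRE] at hX₁RE; exact hX₁RE
  have hτX_le : ∀ X, τ X ≤ finrank ℝ (LinearMap.range (φ X)) := fun X => by
    rw [hτ X]; exact Submodule.finrank_mono inf_le_left
  have hτ₀κ : τ₀ ≤ κ := by
    have h1 := hτX_le X₁
    omega
  set r₀ : ℕ := κ - τ₀ with hr₀
  have hr₀κ : r₀ + τ₀ = κ := by omega
  have hsinf_le : ∀ X ∈ RE, τ₀ ≤ τ X := fun X hX => by
    rw [hτ₀]; exact Nat.sInf_le ⟨X, hX, rfl⟩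
  have hchar : ∀ X, (κ ≤ finrank ℝ (LinearMap.range (φ X)) ∧
      r₀ ≤ finrank ℝ (LinearMap.range (Ψ X))) ↔ X ∈ REsharp := by
    intro X
    rw [hREsharp]
    simp only [Set.mem_setOf_eq]
    constructor
    · rintro ⟨h1, h2⟩
      have hXκ : finrank ℝ (LinearMap.range (φ X)) = κ := le_antisymm (hle X) h1
      have hXRE : X ∈ RE := by rw [hRE]; exact hXκ
      have hk := key X
      have hs := hsinf_le X hXRE
      exact ⟨hXRE, by omega⟩
    · rintro ⟨hXRE, hXτ⟩
      have hXκ : finrank ℝ (LinearMap.range (φ X)) = κ := by rw [hRE] at hXRE; exact hXRE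
      have hk := key X
      exact ⟨by omega, by omega⟩
  have hloc : ∀ X ∈ REsharp, ∃ g : V₁ → ℝ, AnalyticOnNhd ℝ g Set.univ ∧ g X ≠ 0 ∧
      ∀ Y, g Y ≠ 0 → Y ∈ REsharp := by
    intro X hX
    obtain ⟨h1, h2⟩ := (hchar X).mpr hX
    obtain ⟨v, f, hvf⟩ := aux_exists_det (φ X) h1
    obtain ⟨v₂, f₂, hv₂⟩ := aux_exists_det (Ψ X) h2
    set u : Fin r₀ → V₂ :=
      fun i => (Module.evalEquiv ℝ V₂).symm ((LinearMap.proj i) ∘ₗ f₂) with hu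
    have hu_eval : ∀ (i : Fin r₀) (w : Module.Dual ℝ V₂), w (u i) = f₂ w i := by
      intro i w
      rw [hu]
      exact Module.apply_evalEquiv_symm_apply ℝ V₂ w ((LinearMap.proj i) ∘ₗ f₂)
    set M₁ : V₁ → Matrix (Fin κ) (Fin κ) ℝ :=
      fun Y => Matrix.of fun i j => f (φ Y (v j)) i with hM₁
    set M₂ : V₁ → Matrix (Fin r₀) (Fin r₀) ℝ :=
      fun Y => Matrix.of fun i j => B (φ Y (v₂ j)) (φ Y (u i)) with hM₂
    have ha1 : AnalyticOnNhd ℝ (fun Y => (M₁ Y).det) Set.univ := by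
      apply aux_analytic_det
      intro i j
      exact aux_analytic_linear ((LinearMap.proj i) ∘ₗ f ∘ₗ (φ.flip (v j)))
    have ha2 : AnalyticOnNhd ℝ (fun Y => (M₂ Y).det) Set.univ := by
      apply aux_analytic_det
      intro i j
      set e : Basis (Fin (finrank ℝ V₁)) ℝ V₁ := finBasis ℝ V₁ with he
      have hexp : (fun Y => M₂ Y i j) =
          fun Y => ∑ l, e.repr Y l * B (φ (e l) (v₂ j)) (φ Y (u i)) := by
        ext Y
        have := aux_basis_expand e ((B.flip (φ Y (u i))) ∘ₗ (φ.flip (v₂ j))) Y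
        simpa [LinearMap.flip_apply, hM₂] using this
      rw [hexp]
      apply Finset.analyticOnNhd_fun_sum
      intro l _
      apply AnalyticOnNhd.mul
      · exact aux_analytic_linear (e.coord l)
      · exact aux_analytic_linear ((B (φ (e l) (v₂ j))) ∘ₗ (φ.flip (u i)))
    have hM₂X : M₂ X = Matrix.of fun i j => f₂ (Ψ X (v₂ j)) i := by
      ext i j
      rw [hM₂]
      simp only [Matrix.of_apply]
      rw [← hu_eval i (Ψ X (v₂ j))]
      simp [hΨ]
    refine ⟨fun Y => (M₁ Y).det * (M₂ Y).det, ha1.mul ha2, ?_, ?_⟩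
    · apply mul_ne_zero
      · exact hvf
      · rw [hM₂X]; exact hv₂
    · intro Y hY
      have hd1 : (M₁ Y).det ≠ 0 := left_ne_zero_of_mul hY
      have hd2 : (M₂ Y).det ≠ 0 := right_ne_zero_of_mul hY
      apply (hchar Y).mp
      constructor
      · exact aux_rank_ge (φ Y) v f hd1
      · set f' : Module.Dual ℝ V₂ →ₗ[ℝ] (Fin r₀ → ℝ) :=
          LinearMap.pi (fun i => Module.Dual.eval ℝ V₂ (u i)) with hf'
        have heq : (Matrix.of fun i j => f' (Ψ Y (v₂ j)) i) = M₂ Y := by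
          ext i j
          rw [hM₂]
          simp [hf', LinearMap.pi_apply, Module.Dual.eval_apply, hΨ]
        exact aux_rank_ge (Ψ Y) v₂ f' (by rw [heq]; exact hd2)
  have hopen : IsOpen REsharp := by
    rw [isOpen_iff_mem_nhds]
    intro X hX
    obtain ⟨g, hga, hgX, hsub⟩ := hloc X hX
    have hcont : Continuous g := by
      rw [← continuousOn_univ]
      exact hga.continuousOn
    have hO : IsOpen {Y | g Y ≠ 0} := isOpen_ne.preimage hcont
    exact Filter.mem_of_superset (hO.mem_nhds hgX) (fun Y hY => hsub Y hY)
  have hX₁sharp : X₁ ∈ REsharp := by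
    rw [hREsharp]; exact ⟨hX₁RE, hX₁τ⟩
  obtain ⟨g, hga, hgX, hsub⟩ := hloc X₁ hX₁sharp
  exact ⟨hopen, Dense.mono (fun Y hY => hsub Y hY) (aux_dense hga hgX)⟩
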